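/- If N is a product of primes each congruent to 1 mod 4, then there exist coprime integers a, b with a² + b² = N. -/

import Mathlib

/-- If a prime fails to be coprime on the composition `(a*c - b*d, a*d + b*c)`,
then `p` divides both components. -/
private lemma aux_dvd (p M a b c d : ℤ) (hp : Prime p)
    (hab : IsCoprime a b)
    (hM : a ^ 2 + b ^ 2 = M) (hpcd : c ^ 2 + d ^ 2 = p) (hMp : p * M ≠ 0)
    (hnc : ¬ IsCoprime (a * c - b * d) (a * d + b * c)) :
    p ∣ (a * c - b * d) ∧ p ∣ (a * d + b * c) := by
  set s := a * c - b * d with hs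
  set t := a * d + b * c with ht
  have hg : Int.gcd s t ≠ 1 := by
    intro hg1
    exact hnc (Int.isCoprime_iff_gcd_eq_one.mpr hg1)
  have hg0 : Int.gcd s t ≠ 0 := by
    intro hg0
    have hs0 : s = 0 := by
      have := Int.gcd_eq_zero_iff.mp hg0
      exact this.1
    have ht0 : t = 0 := (Int.gcd_eq_zero_iff.mp hg0).2
    apply hMp
    have : p * M = s ^ 2 + t ^ 2 := by
      rw [hs, ht]
      linear_combination (a ^ 2 + b ^ 2) * hpcd.symm + p * hM.symm
    rw [this, hs0, ht0]; ring
  set q := (Int.gcd s t).minFac with hq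
  have hqprime : q.Prime := Nat.minFac_prime hg
  have hqZ : Prime (q : ℤ) := Nat.prime_iff_prime_int.mp hqprime
  have hqg : (q : ℤ) ∣ (Int.gcd s t : ℤ) := Int.natCast_dvd_natCast.mpr (Nat.minFac_dvd _)
  have hqs : (q : ℤ) ∣ s := hqg.trans (Int.gcd_dvd_left s t)
  have hqt : (q : ℤ) ∣ t := hqg.trans (Int.gcd_dvd_right s t)
  have hqap : (q : ℤ) ∣ a * p := by
    have : a * p = c * s + d * t := by rw [hs, ht]; linear_combination a * hpcd.symm
    rw [this]
    exact dvd_add (Dvd.dvd.mul_left hqs c) (Dvd.dvd.mul_left hqt d)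
  have hqbp : (q : ℤ) ∣ b * p := by
    have : b * p = c * t - d * s := by rw [hs, ht]; linear_combination b * hpcd.symm
    rw [this]
    exact dvd_sub (Dvd.dvd.mul_left hqt c) (Dvd.dvd.mul_left hqs d)
  have hqp : (q : ℤ) ∣ p := by
    rcases hqZ.dvd_or_dvd hqap with hqa | hqp
    · rcases hqZ.dvd_or_dvd hqbp with hqb | hqp
      · exact absurd (hab.isUnit_of_dvd' hqa hqb) hqZ.not_unit
      · exact hqp
    · exact hqp
  have hassoc : Associated (q : ℤ) p := hqZ.associated_of_dvd hp hqp
  exact ⟨hassoc.symm.dvd.trans hqs, hassoc.symm.dvd.trans hqt⟩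

/-- Key lemma: one of the two Brahmagupta compositions is primitive. -/
private lemma key (p M a b c d : ℤ) (hp : Prime p) (hodd : ¬ (p : ℤ) ∣ 2)
    (hab : IsCoprime a b) (hcd : IsCoprime c d)
    (hM : a ^ 2 + b ^ 2 = M) (hpcd : c ^ 2 + d ^ 2 = p) (hMp : p * M ≠ 0) :
    IsCoprime (a * c - b * d) (a * d + b * c) ∨
      IsCoprime (a * c + b * d) (a * d - b * c) := by
  by_contra hcon
  push_neg at hcon
  obtain ⟨h1, h2⟩ := hcon
  obtain ⟨hps, hpt⟩ := aux_dvd p M a b c d hp hab hM hpcd hMp h1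
  have h2' : ¬ IsCoprime (a * c - b * (-d)) (a * (-d) + b * c) := by
    intro hco
    apply h2
    have h3 := hco.neg_right
    rw [show a * c - b * (-d) = a * c + b * d from by ring,
      show -(a * (-d) + b * c) = a * d - b * c from by ring] at h3
    exact h3
  obtain ⟨hpu, hpv⟩ := aux_dvd p M a b c (-d) hp hab hM (by linear_combination hpcd) hMp h2'
  -- p divides 2ac, 2bd, 2ad, 2bc
  have hac : p ∣ a * c := by
    have h2ac : p ∣ 2 * (a * c) := by
      have : 2 * (a * c) = (a * c - b * d) + (a * c - b * (-d)) := by ring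
      rw [this]; exact dvd_add hps hpu
    rcases hp.dvd_or_dvd h2ac with h | h
    · exact absurd h hodd
    · exact h
  have hbd : p ∣ b * d := by
    have h2bd : p ∣ 2 * (b * d) := by
      have : 2 * (b * d) = (a * c - b * (-d)) - (a * c - b * d) := by ring
      rw [this]; exact dvd_sub hpu hps
    rcases hp.dvd_or_dvd h2bd with h | h
    · exact absurd h hodd
    · exact h
  have had : p ∣ a * d := by
    have h2ad : p ∣ 2 * (a * d) := by
      have : 2 * (a * d) = (a * d + b * c) - (a * (-d) + b * c) := by ring
      rw [this]; exact dvd_sub hpt hpv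
    rcases hp.dvd_or_dvd h2ad with h | h
    · exact absurd h hodd
    · exact h
  have hbc : p ∣ b * c := by
    have h2bc : p ∣ 2 * (b * c) := by
      have : 2 * (b * c) = (a * d + b * c) + (a * (-d) + b * c) := by ring
      rw [this]; exact dvd_add hpt hpv
    rcases hp.dvd_or_dvd h2bc with h | h
    · exact absurd h hodd
    · exact h
  rcases hp.dvd_or_dvd hac with hpa | hpc
  · rcases hp.dvd_or_dvd hbd with hpb | hpd
    · exact hp.not_unit (hab.isUnit_of_dvd' hpa hpb)
    · rcases hp.dvd_or_dvd hbc with hpb | hpc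
      · exact hp.not_unit (hab.isUnit_of_dvd' hpa hpb)
      · exact hp.not_unit (hcd.isUnit_of_dvd' hpc hpd)
  · rcases hp.dvd_or_dvd had with hpa | hpd
    · rcases hp.dvd_or_dvd hbd with hpb | hpd
      · exact hp.not_unit (hab.isUnit_of_dvd' hpa hpb)
      · exact hp.not_unit (hcd.isUnit_of_dvd' hpc hpd)
    · exact hp.not_unit (hcd.isUnit_of_dvd' hpc hpd)

/-- If `N` is a product of primes each `≡ 1 mod 4`, then `N` is primitively
represented as a sum of two squares. -/
theorem stmt_1 (N : ℕ) (hN : 0 < N)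
    (h : ∀ p : ℕ, p.Prime → p ∣ N → p % 4 = 1) :
    ∃ a b : ℤ, IsCoprime a b ∧ a ^ 2 + b ^ 2 = (N : ℤ) := by
  induction N using Nat.strong_induction_on with
  | _ N ih =>
    rcases eq_or_lt_of_le (show 1 ≤ N from hN) with h1 | h1
    · exact ⟨1, 0, isCoprime_one_left, by rw [← h1]; norm_num⟩
    · -- N > 1
      have hN1 : N ≠ 1 := by omega
      set p := N.minFac with hpdef
      have hp : p.Prime := Nat.minFac_prime hN1
      have hpd : p ∣ N := Nat.minFac_dvd N
      have hp4 : p % 4 = 1 := h p hp hpd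
      obtain ⟨M, hNM⟩ := hpd
      have hM0 : 0 < M := Nat.pos_of_ne_zero (by rintro rfl; simp at hNM; omega)
      have hMlt : M < N := by
        have hp2 : 2 ≤ p := hp.two_le
        calc M < p * M := by nlinarith
        _ = N := hNM.symm
      obtain ⟨a, b, hab, habM⟩ := ih M hMlt hM0 (fun q hq hqd => h q hq (hqd.trans ⟨p, by rw [hNM]; ring⟩))
      have : Fact p.Prime := ⟨hp⟩
      obtain ⟨c, d, hcd⟩ := Nat.Prime.sq_add_sq (p := p) (by omega)
      -- coprimality of c d
      have hcdcop : IsCoprime (c : ℤ) (d : ℤ) := by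
        rw [Int.isCoprime_iff_gcd_eq_one]
        have hg : Nat.gcd c d ∣ p := by
          rcases Nat.gcd_dvd_left c d with hgc
          rcases Nat.gcd_dvd_right c d with hgd
          have : Nat.gcd c d ^ 2 ∣ c ^ 2 + d ^ 2 := by
            exact dvd_add (pow_dvd_pow_of_dvd hgc 2) (pow_dvd_pow_of_dvd hgd 2)
          rw [hcd] at this
          exact (dvd_pow_self _ (by norm_num : 2 ≠ 0)).trans this
        rcases (Nat.Prime.eq_one_or_self_of_dvd hp _ hg) with h1 | hgp
        · simpa [Int.gcd] using h1
        · exfalso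
          have : p ^ 2 ∣ p := by
            have h2 : Nat.gcd c d ^ 2 ∣ c ^ 2 + d ^ 2 :=
              dvd_add (pow_dvd_pow_of_dvd (Nat.gcd_dvd_left c d) 2)
                (pow_dvd_pow_of_dvd (Nat.gcd_dvd_right c d) 2)
            rwa [hcd, hgp] at h2
          have hp2 := hp.two_le
          have := Nat.le_of_dvd (by omega) this
          nlinarith
      have hpZ : Prime (p : ℤ) := Nat.prime_iff_prime_int.mp hp
      have hodd : ¬ ((p : ℤ) ∣ 2) := by
        intro hdvd
        have : (p : ℤ) ∣ (2 : ℕ) := by exact_mod_cast hdvd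
        have : p ∣ 2 := Int.ofNat_dvd.mp this
        have := (Nat.prime_dvd_prime_iff_eq hp Nat.prime_two).mp this
        omega
      have hcdZ : (c : ℤ) ^ 2 + (d : ℤ) ^ 2 = (p : ℤ) := by exact_mod_cast hcd
      have hMp : (p : ℤ) * (M : ℤ) ≠ 0 := by
        have hpos : 0 < p * M := hNM ▸ hN
        have : (0 : ℤ) < (p : ℤ) * (M : ℤ) := by exact_mod_cast hpos
        exact this.ne'
      rcases key (p : ℤ) (M : ℤ) a b c d hpZ hodd hab hcdcop habM hcdZ hMp with hco | hco
      · refine ⟨a * c - b * d, a * d + b * c, hco, ?_⟩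
        have : (N : ℤ) = (p : ℤ) * (M : ℤ) := by exact_mod_cast hNM
        rw [this]
        linear_combination ((c : ℤ) ^ 2 + (d : ℤ) ^ 2) * habM + (M : ℤ) * hcdZ
      · refine ⟨a * c + b * d, a * d - b * c, hco, ?_⟩
        have : (N : ℤ) = (p : ℤ) * (M : ℤ) := by exact_mod_cast hNM
        rw [this]
        linear_combination ((c : ℤ) ^ 2 + (d : ℤ) ^ 2) * habM + (M : ℤ) * hcdZ
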